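/- arXiv:1810.10047 — 2 statements merged into one kernel-verified Lean document; each statement's English description precedes it below -/
import Mathlib

section
/- If a finite group G admits a 1-rotational (2^n·m)-factorization of the complete graph on G ∪ {∞}, where n ≥ 1 and m is odd, then G has at most m(2^n − 1) conjugacy classes containing involutions. -/
open SimpleGraph

/-- The image of a graph on `G ∪ {∞}` under right multiplication by `g` (with `∞ g = ∞`). -/
def shiftG {G : Type*} [Group G] (F : SimpleGraph (Option G)) (g : G) :
    SimpleGraph (Option G) :=
  F.map (Equiv.optionCongr (Equiv.mulRight g)).toEmbedding

/-- The `G`-stabilizer of a graph on `G ∪ {∞}`. -/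
def stabG {G : Type*} [Group G] (F : SimpleGraph (Option G)) : Set G :=
  {g | shiftG F g = F}

/-- A `k`-factor: a spanning `k`-regular subgraph of the complete graph. -/
def IsKFactor {V : Type*} (k : ℕ) (F : SimpleGraph V) : Prop :=
  ∀ v : V, (F.neighborSet v).ncard = k

/-- A `k`-factorization: a set of `k`-factors whose edges partition the complete graph. -/
def IsKFactorization {V : Type*} (k : ℕ) (𝓕 : Set (SimpleGraph V)) : Prop :=
  (∀ F ∈ 𝓕, IsKFactor k F) ∧
  ∀ u v : V, u ≠ v → ∃! F, F ∈ 𝓕 ∧ F.Adj u v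

/-- A family of graphs on `G ∪ {∞}` is `1`-rotational if it is closed under the
right multiplication action of `G`. -/
def IsRotational {G : Type*} [Group G] (𝓕 : Set (SimpleGraph (Option G))) : Prop :=
  ∀ F ∈ 𝓕, ∀ g : G, shiftG F g ∈ 𝓕

section Aux

variable {G : Type*} [Group G]

lemma shiftG_shiftG (F : SimpleGraph (Option G)) (g h : G) :
    shiftG (shiftG F g) h = shiftG F (g * h) := by
  unfold shiftG
  rw [SimpleGraph.map_map]
  congr 1
  ext x
  cases x <;> simp [mul_assoc]

lemma shiftG_one (F : SimpleGraph (Option G)) : shiftG F (1 : G) = F := by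
  have : (Equiv.optionCongr (Equiv.mulRight (1 : G))).toEmbedding
      = Function.Embedding.refl (Option G) := by
    ext x; cases x <;> simp
  rw [shiftG, this]; exact SimpleGraph.map_id F

lemma shiftG_adj_iff (F : SimpleGraph (Option G)) (g : G) {a b : Option G} :
    (shiftG F g).Adj (Option.map (· * g) a) (Option.map (· * g) b) ↔ F.Adj a b := by
  have h : ∀ x : Option G,
      Option.map (· * g) x = (Equiv.optionCongr (Equiv.mulRight g)).toEmbedding x := by
    intro x; cases x <;> rfl
  rw [h a, h b]
  exact SimpleGraph.map_adj_apply

end Aux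

set_option maxHeartbeats 1000000 in
theorem stmt3 {G : Type*} [Group G] [Fintype G] (n m : ℕ) (hn : 1 ≤ n) (hm : Odd m)
    (𝓕 : Set (SimpleGraph (Option G)))
    (hfac : IsKFactorization (2 ^ n * m) 𝓕) (hrot : IsRotational 𝓕) :
    {c : ConjClasses G | ∃ x : G, orderOf x = 2 ∧ ConjClasses.mk x = c}.ncard ≤
      m * (2 ^ n - 1) := by
  classical
  have hm0 : m ≠ 0 := by rintro rfl; simp [Nat.odd_iff] at hm
  have hkpos : 0 < 2 ^ n * m :=
    Nat.mul_pos (Nat.pow_pos (by norm_num)) (Nat.pos_of_ne_zero hm0)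
  -- the factor through the edge {∞, 1}
  obtain ⟨F₀, ⟨hF₀, hadj₀⟩, huniq₀⟩ := hfac.2 none (some 1) (by simp)
  have uniq1 : ∀ F ∈ 𝓕, F.Adj none (some 1) → F = F₀ := fun F hF h => huniq₀ F ⟨hF, h⟩
  -- the stabilizer of F₀ equals the set of neighbors of ∞ in F₀
  have hmemS : ∀ a : G, a ∈ stabG F₀ ↔ F₀.Adj none (some a) := by
    intro a
    constructor
    · intro h
      have h' : shiftG F₀ a = F₀ := h
      have := (shiftG_adj_iff F₀ a (a := none) (b := some 1)).mpr hadj₀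
      simpa [h'] using this
    · intro h
      have h1 : (shiftG F₀ a⁻¹).Adj none (some 1) := by
        have := (shiftG_adj_iff F₀ a⁻¹ (a := none) (b := some a)).mpr h
        simpa using this
      have h2 : shiftG F₀ a⁻¹ = F₀ := uniq1 _ (hrot F₀ hF₀ a⁻¹) h1
      have : shiftG F₀ a = F₀ := by
        calc shiftG F₀ a = shiftG (shiftG F₀ a⁻¹) a := by rw [h2]
        _ = shiftG F₀ (a⁻¹ * a) := shiftG_shiftG _ _ _
        _ = F₀ := by rw [inv_mul_cancel, shiftG_one]
      exact this
  -- the stabilizer as a subgroup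
  set Ssub : Subgroup G :=
    { carrier := stabG F₀
      one_mem' := shiftG_one F₀
      mul_mem' := by
        intro a b ha hb
        show shiftG F₀ (a * b) = F₀
        rw [← shiftG_shiftG, ha, hb]
      inv_mem' := by
        intro a ha
        show shiftG F₀ a⁻¹ = F₀
        have : shiftG F₀ a = F₀ := ha
        calc shiftG F₀ a⁻¹ = shiftG (shiftG F₀ a) a⁻¹ := by rw [this]
        _ = shiftG F₀ (a * a⁻¹) := shiftG_shiftG _ _ _
        _ = F₀ := by rw [mul_inv_cancel, shiftG_one] } with hSsub
  have hmemS' : ∀ a : G, a ∈ Ssub ↔ F₀.Adj none (some a) := hmemS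
  -- cardinality of the stabilizer
  have hScard : Nat.card Ssub = 2 ^ n * m := by
    have h1 : (F₀.neighborSet none).ncard = 2 ^ n * m := hfac.1 F₀ hF₀ none
    have h2 : F₀.neighborSet none = some '' {a : G | F₀.Adj none (some a)} := by
      ext v
      cases v with
      | none => simp [SimpleGraph.neighborSet]
      | some a => simp [SimpleGraph.neighborSet]
    have h3 : ({a : G | F₀.Adj none (some a)}).ncard = 2 ^ n * m := by
      rw [← Set.ncard_image_of_injective _ (Option.some_injective G), ← h2, h1]
    have h4 : (Ssub : Set G) = {a : G | F₀.Adj none (some a)} := by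
      ext a; exact hmemS a
    calc Nat.card ↥Ssub = ((Ssub : Set G)).ncard := Nat.card_coe_set_eq _
    _ = 2 ^ n * m := by rw [h4, h3]
  -- every involution is conjugate to an involution in the stabilizer
  have key : ∀ x : G, orderOf x = 2 →
      ∃ s : G, s ∈ Ssub ∧ orderOf s = 2 ∧ ConjClasses.mk s = ConjClasses.mk x := by
    intro x hx
    have hx1 : x ≠ 1 := by
      intro h; rw [h, orderOf_one] at hx; norm_num at hx
    have hxx : x * x = 1 := by
      have := pow_orderOf_eq_one x
      rwa [hx, pow_two] at this
    obtain ⟨F, ⟨hF, hadj⟩, huniq⟩ := hfac.2 (some 1) (some x)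
      (by simp [Ne.symm hx1])
    -- x stabilizes F
    have hstab : shiftG F x = F := by
      have h1 : (shiftG F x).Adj (some x) (some 1) := by
        have := (shiftG_adj_iff F x (a := some 1) (b := some x)).mpr hadj
        simpa [hxx] using this
      exact huniq _ ⟨hrot F hF x, h1.symm⟩
    -- F has a neighbor a of ∞
    have hne : (F.neighborSet none).Nonempty := by
      rw [← Set.ncard_pos (Set.toFinite _), hfac.1 F hF none]; exact hkpos
    obtain ⟨v, hv⟩ := hne
    obtain ⟨a, rfl⟩ : ∃ a : G, v = some a := by
      cases v with
      | none => exact absurd hv (F.irrefl)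
      | some a => exact ⟨a, rfl⟩
    have hva : F.Adj none (some a) := hv
    -- F shifted by a⁻¹ is F₀
    have hFa : shiftG F a⁻¹ = F₀ := by
      apply uniq1 _ (hrot F hF a⁻¹)
      have := (shiftG_adj_iff F a⁻¹ (a := none) (b := some a)).mpr hva
      simpa using this
    refine ⟨a * x * a⁻¹, ?_, ?_, ?_⟩
    · show shiftG F₀ (a * x * a⁻¹) = F₀
      calc shiftG F₀ (a * x * a⁻¹) = shiftG (shiftG F a⁻¹) (a * x * a⁻¹) := by rw [hFa]
      _ = shiftG F (a⁻¹ * (a * x * a⁻¹)) := shiftG_shiftG _ _ _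
      _ = shiftG F (x * a⁻¹) := by group
      _ = shiftG (shiftG F x) a⁻¹ := (shiftG_shiftG _ _ _).symm
      _ = F₀ := by rw [hstab, hFa]
    · have hsc : SemiconjBy a x (a * x * a⁻¹) := by
        unfold SemiconjBy; group
      rw [← hsc.orderOf_eq a, hx]
    · exact (ConjClasses.mk_eq_mk_iff_isConj.mpr (isConj_iff.mpr ⟨a, rfl⟩)).symm
  -- counting involutions in the stabilizer via Sylow theory
  letI : Fintype ↥Ssub := Fintype.ofFinite _
  haveI : Fact (Nat.Prime 2) := ⟨Nat.prime_two⟩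
  have hfact2 : (Nat.card ↥Ssub).factorization 2 = n := by
    rw [hScard, Nat.factorization_mul (by positivity) hm0]
    have h2m : ¬ (2 ∣ m) := by rw [Nat.odd_iff] at hm; omega
    rw [Finsupp.add_apply, Nat.Prime.factorization_pow Nat.prime_two,
      Finsupp.single_eq_same, Nat.factorization_eq_zero_of_not_dvd h2m]
    omega
  have hPcard : ∀ P : Sylow 2 ↥Ssub, Nat.card P = 2 ^ n := by
    intro P; rw [Sylow.card_eq_multiplicity, hfact2]
  have hPindex : ∀ P : Sylow 2 ↥Ssub, (P : Subgroup ↥Ssub).index = m := by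
    intro P
    have h := Subgroup.index_mul_card (P : Subgroup ↥Ssub)
    rw [hPcard P, hScard] at h
    have h2 : (P : Subgroup ↥Ssub).index * 2 ^ n = m * 2 ^ n := by
      rw [h]; ring
    exact Nat.eq_of_mul_eq_mul_right (Nat.pow_pos (by norm_num)) h2
  obtain ⟨P⟩ : Nonempty (Sylow 2 ↥Ssub) := inferInstance
  have hNS : Nat.card (Sylow 2 ↥Ssub) ≤ m := by
    have := Sylow.card_dvd_index P
    rw [hPindex P] at this
    exact Nat.le_of_dvd (Nat.pos_of_ne_zero hm0) this
  -- Finset counting inside the stabilizer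
  set T' : Finset ↥Ssub := Finset.univ.filter (fun y => orderOf y = 2) with hT'
  have hT'card : T'.card ≤ m * (2 ^ n - 1) := by
    set fQ : Sylow 2 ↥Ssub → Finset ↥Ssub :=
      fun Q => Finset.univ.filter (fun y => y ∈ (Q : Subgroup ↥Ssub) ∧ y ≠ 1) with hfQ
    have hsub : T' ⊆ Finset.univ.biUnion fQ := by
      intro y hy
      rw [hT', Finset.mem_filter] at hy
      have hy2 : orderOf y = 2 := hy.2
      have hy1 : y ≠ 1 := by
        intro h; rw [h, orderOf_one] at hy2; norm_num at hy2
      have hpg : IsPGroup 2 (Subgroup.zpowers y) :=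
        IsPGroup.of_card (by rw [Nat.card_zpowers, hy2, pow_one])
      obtain ⟨Q, hQ⟩ := hpg.exists_le_sylow
      have : y ∈ (Q : Subgroup ↥Ssub) := hQ (Subgroup.mem_zpowers y)
      rw [Finset.mem_biUnion]
      exact ⟨Q, Finset.mem_univ Q, by rw [hfQ]; simp [this, hy1]⟩
    have hfQcard : ∀ Q : Sylow 2 ↥Ssub, (fQ Q).card = 2 ^ n - 1 := by
      intro Q
      have he : fQ Q = (Finset.univ.filter (fun y => y ∈ (Q : Subgroup ↥Ssub))).erase 1 := by
        ext y
        rw [hfQ]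
        simp only [Finset.mem_filter, Finset.mem_erase, Finset.mem_univ, true_and]
        tauto
      rw [he, Finset.card_erase_of_mem
        (Finset.mem_filter.mpr ⟨Finset.mem_univ _, (Q : Subgroup ↥Ssub).one_mem⟩)]
      congr 1
      have hc : (Finset.univ.filter (fun y => y ∈ (Q : Subgroup ↥Ssub))).card
          = Fintype.card {y : ↥Ssub // y ∈ (Q : Subgroup ↥Ssub)} := by
        rw [Fintype.card_subtype]
      rw [hc, ← Nat.card_eq_fintype_card]
      exact hPcard Q
    calc T'.card ≤ (Finset.univ.biUnion fQ).card := Finset.card_le_card hsub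
    _ ≤ ∑ Q : Sylow 2 ↥Ssub, (fQ Q).card := Finset.card_biUnion_le
    _ = Fintype.card (Sylow 2 ↥Ssub) * (2 ^ n - 1) := by
        rw [Finset.sum_congr rfl (fun Q _ => hfQcard Q), Finset.sum_const, Finset.card_univ,
          smul_eq_mul]
    _ ≤ m * (2 ^ n - 1) := by
        apply Nat.mul_le_mul_right
        rw [← Nat.card_eq_fintype_card]
        exact hNS
  -- transfer the count to the set of involutions of G lying in the stabilizer
  set T : Set G := {s : G | s ∈ Ssub ∧ orderOf s = 2} with hT
  have hTcard : T.ncard ≤ m * (2 ^ n - 1) := by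
    have h1 : T = Subtype.val '' ((T' : Finset ↥Ssub) : Set ↥Ssub) := by
      ext s
      simp only [hT, hT', Set.mem_image, Finset.coe_filter, Set.mem_setOf_eq,
        Finset.mem_univ, true_and]
      constructor
      · rintro ⟨hs, hs2⟩
        exact ⟨⟨s, hs⟩, by rw [Subgroup.orderOf_mk]; exact hs2, rfl⟩
      · rintro ⟨y, hy, rfl⟩
        exact ⟨y.2, by rw [Subgroup.orderOf_coe]; exact hy⟩
    rw [h1, Set.ncard_image_of_injective _ Subtype.coe_injective, Set.ncard_coe_finset]
    exact hT'card
  -- finally, map each conjugacy class of involutions to a representative in T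
  set C : Set (ConjClasses G) :=
    {c : ConjClasses G | ∃ x : G, orderOf x = 2 ∧ ConjClasses.mk x = c} with hC
  have hmain : C.ncard ≤ T.ncard := by
    set f : ConjClasses G → G := fun c =>
      if h : ∃ s : G, s ∈ Ssub ∧ orderOf s = 2 ∧ ConjClasses.mk s = c then h.choose else 1
      with hf
    have hfspec : ∀ c ∈ C, f c ∈ T ∧ ConjClasses.mk (f c) = c := by
      intro c hc
      obtain ⟨x, hx2, hxc⟩ := hc
      have hex : ∃ s : G, s ∈ Ssub ∧ orderOf s = 2 ∧ ConjClasses.mk s = c := by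
        obtain ⟨s, hs1, hs2, hs3⟩ := key x hx2
        exact ⟨s, hs1, hs2, by rw [hs3, hxc]⟩
      rw [hf]
      simp only [dif_pos hex]
      obtain ⟨h1, h2, h3⟩ := hex.choose_spec
      exact ⟨⟨h1, h2⟩, h3⟩
    exact Set.ncard_le_ncard_of_injOn f (fun c hc => (hfspec c hc).1)
      (fun c hc c' hc' hcc => by rw [← (hfspec c hc).2, ← (hfspec c' hc').2, hcc])
      (Set.toFinite T)
  exact hmain.trans hTcard
end

section
/- If there exists a 2-starter under a finite group G, then there exists a 2n-starter under G × ℤ_n for every n ≥ 1. -/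
open SimpleGraph

/-- The difference list of a graph on `G ∪ {∞}` covers every nonidentity element of `G`. -/
def DiffCovers {G : Type*} [Group G] (F : SimpleGraph (Option G)) : Prop :=
  ∀ d : G, d ≠ 1 → ∃ a b : G, F.Adj (some a) (some b) ∧ a * b⁻¹ = d

/-- A `k`-starter under `G`: a `k`-factor whose `G`-stabilizer has order `k` and whose
difference list covers `G ∖ {1}`. -/
def IsStarter {G : Type*} [Group G] (k : ℕ) (F : SimpleGraph (Option G)) : Prop :=
  IsKFactor k F ∧ (stabG F).ncard = k ∧ DiffCovers F

/-- The graph `H` on `(G × ℤ_n) ∪ {∞}` constructed from a `2`-factor `F` of the complete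
graph on `G ∪ {∞}`: join `∞` to `(x,k)` for `x ~ ∞` in `F`; join `(x,k)` to `(x,r)` for
`x ~ ∞` in `F` and `k ≠ r`; join `(x,k)` to `(y,r)` for every edge `[x,y]` of `F`
avoiding `∞`. -/
def Hgraph {G : Type*} [Group G] (F : SimpleGraph (Option G)) (n : ℕ) :
    SimpleGraph (Option (G × Multiplicative (ZMod n))) :=
  SimpleGraph.fromRel (fun u v =>
    (∃ (x : G) (k : Multiplicative (ZMod n)),
        F.Adj none (some x) ∧ u = none ∧ v = some (x, k)) ∨
    (∃ (x : G) (k r : Multiplicative (ZMod n)),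
        F.Adj none (some x) ∧ k ≠ r ∧ u = some (x, k) ∧ v = some (x, r)) ∨
    (∃ (x y : G) (k r : Multiplicative (ZMod n)),
        F.Adj (some x) (some y) ∧ u = some (x, k) ∧ v = some (y, r)))

section AuxLemmas

variable {G : Type*} [Group G]

lemma ncard_prod' {α β : Type*} (s : Set α) (t : Set β) :
    (s ×ˢ t).ncard = s.ncard * t.ncard := by
  rw [← Nat.card_coe_set_eq, ← Nat.card_coe_set_eq s, ← Nat.card_coe_set_eq t,
    Nat.card_congr (Equiv.Set.prod s t), Nat.card_prod]

lemma ncard_univ_mzmod (n : ℕ) [NeZero n] :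
    (Set.univ : Set (Multiplicative (ZMod n))).ncard = n := by
  rw [Set.ncard_univ]; simp [Nat.card_eq_fintype_card, ZMod.card]

lemma shiftG_adj (F : SimpleGraph (Option G)) (g : G) (u v : Option G) :
    (shiftG F g).Adj u v ↔ F.Adj (Option.map (· * g⁻¹) u) (Option.map (· * g⁻¹) v) := by
  constructor
  · rintro ⟨-, a, b, h, rfl, rfl⟩
    cases a <;> cases b <;> simpa using h
  · intro h
    have hne : u ≠ v := by rintro rfl; exact F.irrefl h
    refine ⟨hne, Option.map (· * g⁻¹) u, Option.map (· * g⁻¹) v, h, ?_, ?_⟩ <;>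
      (cases u <;> cases v <;> simp)

lemma H_adj_none_some' (F : SimpleGraph (Option G)) (n : ℕ)
    (p : G × Multiplicative (ZMod n)) :
    (Hgraph F n).Adj none (some p) ↔ F.Adj none (some p.1) := by
  simp only [Hgraph, SimpleGraph.fromRel_adj]
  aesop

lemma H_adj_some_some' (F : SimpleGraph (Option G)) (n : ℕ)
    (p q : G × Multiplicative (ZMod n)) :
    (Hgraph F n).Adj (some p) (some q) ↔
      (p.1 = q.1 ∧ p.2 ≠ q.2 ∧ F.Adj none (some p.1)) ∨ F.Adj (some p.1) (some q.1) := by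
  obtain ⟨a, k⟩ := p
  obtain ⟨b, r⟩ := q
  constructor
  · intro h
    obtain ⟨hne, hrel⟩ := (SimpleGraph.fromRel_adj _ _ _).mp h
    have hirr : ¬ F.Adj (some a) (some a) := F.irrefl
    have hsym : F.Adj (some b) (some a) → F.Adj (some a) (some b) := fun h => F.adj_symm h
    aesop
  · rintro (⟨h1, h2, h3⟩ | h)
    · dsimp only at h1 h2 h3
      subst h1
      refine (SimpleGraph.fromRel_adj _ _ _).mpr ⟨by simp [h2], Or.inl (Or.inr (Or.inl ?_))⟩
      exact ⟨a, k, r, h3, h2, rfl, rfl⟩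
    · dsimp only at h
      refine (SimpleGraph.fromRel_adj _ _ _).mpr
        ⟨fun hc => ?_, Or.inl (Or.inr (Or.inr ⟨a, b, k, r, h, rfl, rfl⟩))⟩
      simp only [Option.some.injEq, Prod.mk.injEq] at hc
      exact F.irrefl (hc.1 ▸ h)

lemma shiftG_Hgraph (F : SimpleGraph (Option G)) (n : ℕ)
    (g : G) (m : Multiplicative (ZMod n)) :
    shiftG (Hgraph F n) (g, m) = Hgraph (shiftG F g) n := by
  ext u v
  rw [shiftG_adj]
  match u, v with
  | none, none => simp
  | none, some p =>
      rw [show Option.map (· * (g, m)⁻¹) (none : Option (G × Multiplicative (ZMod n))) = none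
        from rfl, show Option.map (· * (g, m)⁻¹) (some p) = some (p * (g, m)⁻¹) from rfl,
        H_adj_none_some', H_adj_none_some', shiftG_adj]
      simp [Prod.fst_mul]
  | some p, none =>
      rw [SimpleGraph.adj_comm, SimpleGraph.adj_comm (Hgraph (shiftG F g) n),
        show Option.map (· * (g, m)⁻¹) (none : Option (G × Multiplicative (ZMod n))) = none
        from rfl, show Option.map (· * (g, m)⁻¹) (some p) = some (p * (g, m)⁻¹) from rfl,
        H_adj_none_some', H_adj_none_some', shiftG_adj]
      simp [Prod.fst_mul]
  | some p, some q =>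
      rw [show Option.map (· * (g, m)⁻¹) (some p) = some (p * (g, m)⁻¹) from rfl,
        show Option.map (· * (g, m)⁻¹) (some q) = some (q * (g, m)⁻¹) from rfl,
        H_adj_some_some', H_adj_some_some']
      simp only [shiftG_adj]
      simp [Prod.ext_iff, mul_left_inj]

lemma Hgraph_injective {F F' : SimpleGraph (Option G)} {n : ℕ}
    (h : Hgraph F n = Hgraph F' n) : F = F' := by
  ext u v
  match u, v with
  | none, none => simp
  | none, some x =>
      have h2 := iff_of_eq (congrArg (fun H => H.Adj none (some (x, 1))) h)
      rwa [H_adj_none_some', H_adj_none_some'] at h2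
  | some x, none =>
      have h2 := iff_of_eq (congrArg (fun H => H.Adj none (some (x, 1))) h)
      rw [SimpleGraph.adj_comm, SimpleGraph.adj_comm F']
      rwa [H_adj_none_some', H_adj_none_some'] at h2
  | some x, some y =>
      have h2 := iff_of_eq (congrArg (fun H => H.Adj (some (x, 1)) (some (y, 1))) h)
      rw [H_adj_some_some', H_adj_some_some'] at h2
      simpa using h2

end AuxLemmas
theorem stmt12 {G : Type*} [Group G] [Fintype G]
    (hex : ∃ F : SimpleGraph (Option G), IsStarter 2 F) (n : ℕ) (hn : 1 ≤ n) :
    ∃ H : SimpleGraph (Option (G × Multiplicative (ZMod n))), IsStarter (2 * n) H := by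
  obtain ⟨F, hF2, hstab, hdiff⟩ := hex
  haveI : NeZero n := ⟨by omega⟩
  refine ⟨Hgraph F n, ?_, ?_, ?_⟩
  · intro v
    match v with
    | none =>
        have e0 : F.neighborSet none = some '' {x | F.Adj none (some x)} := by
          ext w
          cases w <;> simp [SimpleGraph.mem_neighborSet]
        have e2 : {x | F.Adj none (some x)}.ncard = 2 := by
          have h2 := hF2 none
          rwa [e0, Set.ncard_image_of_injective _ (Option.some_injective G)] at h2
        have e1 : (Hgraph F n).neighborSet none =
            some '' ({x | F.Adj none (some x)} ×ˢ
              (Set.univ : Set (Multiplicative (ZMod n)))) := by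
          ext w
          match w with
          | none => simp [SimpleGraph.mem_neighborSet]
          | some p =>
              simp only [SimpleGraph.mem_neighborSet, H_adj_none_some', Set.mem_image,
                Set.mem_prod, Set.mem_setOf_eq, Set.mem_univ, and_true,
                Option.some.injEq]
              constructor
              · intro h; exact ⟨p, h, rfl⟩
              · rintro ⟨q, hq, rfl⟩; exact hq
        rw [e1, Set.ncard_image_of_injective _ (Option.some_injective _), ncard_prod', e2,
          ncard_univ_mzmod]
    | some p =>
        obtain ⟨a, k⟩ := p
        by_cases hinf : F.Adj none (some a)
        · have hnone : (none : Option G) ∈ F.neighborSet (some a) := F.adj_symm hinf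
          have hexy : ∃ y : G, F.neighborSet (some a) = {none, some y} := by
            obtain ⟨z, w, hzw, hset⟩ := Set.ncard_eq_two.mp (hF2 (some a))
            rw [hset] at hnone
            simp only [Set.mem_insert_iff, Set.mem_singleton_iff] at hnone
            rcases hnone with h | h
            · subst h
              cases w with
              | none => exact absurd rfl hzw
              | some y => exact ⟨y, hset⟩
            · subst h
              cases z with
              | none => exact absurd rfl hzw
              | some y => exact ⟨y, by rw [hset, Set.pair_comm]⟩
          obtain ⟨y, hy⟩ := hexy
          have hay : F.Adj (some a) (some y) := by
            rw [← SimpleGraph.mem_neighborSet, hy] at *; simp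
          have hya : y ≠ a := fun h => F.irrefl (h ▸ hay)
          have key : ∀ b : G, F.Adj (some a) (some b) ↔ b = y := by
            intro b
            constructor
            · intro h
              have hb : (some b : Option G) ∈ F.neighborSet (some a) := h
              rw [hy] at hb
              simpa using hb
            · rintro rfl; exact hay
          have e : (Hgraph F n).neighborSet (some (a, k)) =
              insert none (some '' ((({a} : Set G) ×ˢ
                  ({k}ᶜ : Set (Multiplicative (ZMod n)))) ∪
                (({y} : Set G) ×ˢ (Set.univ : Set (Multiplicative (ZMod n)))))) := by
            ext w
            match w with
            | none =>
                have hadj : (Hgraph F n).Adj (some (a, k)) none :=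
                  ((Hgraph F n).adj_comm _ _).mp ((H_adj_none_some' F n (a, k)).mpr hinf)
                simp [SimpleGraph.mem_neighborSet, hadj]
            | some q =>
                obtain ⟨b, r⟩ := q
                simp only [SimpleGraph.mem_neighborSet, H_adj_some_some', key b,
                  Set.mem_insert_iff, Set.mem_image, Set.mem_union, Set.mem_prod,
                  Set.mem_singleton_iff, Set.mem_compl_iff, Set.mem_univ, and_true,
                  Option.some.injEq, reduceCtorEq, false_or]
                constructor
                · rintro (⟨h1, h2, h3⟩ | h)
                  · exact ⟨(b, r), Or.inl ⟨h1.symm, fun hc => h2 hc.symm⟩, rfl⟩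
                  · exact ⟨(b, r), Or.inr h, rfl⟩
                · rintro ⟨⟨b', r'⟩, (⟨h1, h2⟩ | h1), heq⟩
                  · simp only [Option.some.injEq, Prod.mk.injEq] at heq
                    obtain ⟨rfl, rfl⟩ := heq
                    exact Or.inl ⟨h1.symm, fun hc => h2 hc.symm, h1 ▸ hinf⟩
                  · simp only [Option.some.injEq, Prod.mk.injEq] at heq
                    obtain ⟨rfl, rfl⟩ := heq
                    exact Or.inr h1
          rw [e]
          have hnotmem : (none : Option (G × Multiplicative (ZMod n))) ∉
              some '' ((({a} : Set G) ×ˢ ({k}ᶜ : Set (Multiplicative (ZMod n)))) ∪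
                (({y} : Set G) ×ˢ (Set.univ : Set (Multiplicative (ZMod n))))) := by simp
          rw [Set.ncard_insert_of_notMem hnotmem,
            Set.ncard_image_of_injective _ (Option.some_injective _)]
          have hdisj : Disjoint (({a} : Set G) ×ˢ ({k}ᶜ : Set (Multiplicative (ZMod n))))
              (({y} : Set G) ×ˢ (Set.univ : Set (Multiplicative (ZMod n)))) := by
            rw [Set.disjoint_left]
            rintro ⟨u1, u2⟩ h1 h2
            simp only [Set.mem_prod, Set.mem_singleton_iff] at h1 h2
            exact hya (by rw [← h2.1, h1.1])
          rw [Set.ncard_union_eq hdisj, ncard_prod', ncard_prod', Set.ncard_singleton,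
            Set.ncard_singleton, ncard_univ_mzmod]
          have hcompl : ({k}ᶜ : Set (Multiplicative (ZMod n))).ncard = n - 1 := by
            rw [Set.compl_eq_univ_diff, Set.ncard_diff (Set.subset_univ _),
              Set.ncard_singleton, ncard_univ_mzmod]
          rw [hcompl]
          omega
        · have hnone : (none : Option G) ∉ F.neighborSet (some a) :=
            fun h => hinf (F.adj_symm h)
          obtain ⟨z, w, hzw, hset⟩ := Set.ncard_eq_two.mp (hF2 (some a))
          have hz : z ≠ none := by rintro rfl; exact hnone (by rw [hset]; simp)
          have hw : w ≠ none := by rintro rfl; exact hnone (by rw [hset]; simp)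
          obtain ⟨y₁, rfl⟩ := Option.ne_none_iff_exists'.mp hz
          obtain ⟨y₂, rfl⟩ := Option.ne_none_iff_exists'.mp hw
          have hy12 : y₁ ≠ y₂ := fun h => hzw (by rw [h])
          have key : ∀ b : G, F.Adj (some a) (some b) ↔ b = y₁ ∨ b = y₂ := by
            intro b
            rw [← SimpleGraph.mem_neighborSet, hset]
            simp
          have e : (Hgraph F n).neighborSet (some (a, k)) =
              some '' ((({y₁, y₂} : Set G)) ×ˢ
                (Set.univ : Set (Multiplicative (ZMod n)))) := by
            ext w'
            match w' with
            | none =>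
                have hadj : ¬ (Hgraph F n).Adj (some (a, k)) none :=
                  fun h => hinf ((H_adj_none_some' F n (a, k)).mp ((Hgraph F n).adj_symm h))
                simp [SimpleGraph.mem_neighborSet, hadj]
            | some q =>
                obtain ⟨b, r⟩ := q
                simp only [SimpleGraph.mem_neighborSet, H_adj_some_some', key b,
                  Set.mem_image, Set.mem_prod, Set.mem_insert_iff, Set.mem_singleton_iff,
                  Set.mem_univ, and_true, Option.some.injEq]
                constructor
                · rintro (⟨h1, h2, h3⟩ | h)
                  · exact absurd h3 hinf
                  · exact ⟨(b, r), h, rfl⟩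
                · rintro ⟨⟨b', r'⟩, h1, heq⟩
                  simp only [Option.some.injEq, Prod.mk.injEq] at heq
                  obtain ⟨rfl, rfl⟩ := heq
                  exact Or.inr h1
          rw [e, Set.ncard_image_of_injective _ (Option.some_injective _), ncard_prod',
            Set.ncard_pair hy12, ncard_univ_mzmod]
  · have hsetstab : stabG (Hgraph F n) =
        (stabG F) ×ˢ (Set.univ : Set (Multiplicative (ZMod n))) := by
      ext ⟨g, m⟩
      simp only [stabG, Set.mem_setOf_eq, Set.mem_prod, Set.mem_univ, and_true]
      rw [shiftG_Hgraph]
      exact ⟨fun h => Hgraph_injective h, fun h => by rw [h]⟩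
    rw [hsetstab, ncard_prod', hstab, ncard_univ_mzmod]
  · rintro ⟨g, m⟩ hd
    by_cases hg : g = 1
    · subst hg
      have hm : m ≠ 1 := by
        intro h
        exact hd (by simp [Prod.ext_iff, h])
      have hnon : (F.neighborSet none).Nonempty := by
        apply Set.nonempty_of_ncard_ne_zero
        rw [hF2 none]
        omega
      obtain ⟨w, hw⟩ := hnon
      rw [SimpleGraph.mem_neighborSet] at hw
      match w, hw with
      | none, hw => exact absurd hw F.irrefl
      | some x, hw =>
          refine ⟨(x, m), (x, 1),
            (H_adj_some_some' F n (x, m) (x, 1)).mpr (Or.inl ⟨rfl, by simpa using hm, hw⟩), ?_⟩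
          simp [Prod.ext_iff]
    · obtain ⟨a, b, hab, hg'⟩ := hdiff g hg
      refine ⟨(a, m), (b, 1),
        (H_adj_some_some' F n (a, m) (b, 1)).mpr (Or.inr hab), ?_⟩
      simp [Prod.ext_iff, hg']
end
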